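/- Let G be a finite group. The mark homomorphism B(G) ⊗ ℚ → ∏_Γ ℚ, sending the class of a finite G-set S to the tuple (|S^Γ|)_Γ of cardinalities of fixed-point sets, where Γ ranges over conjugacy classes of subgroups of G, is an isomorphism of ℚ-algebras. -/

import Mathlib

open Pointwise Finsupp

noncomputable section

/-- Conjugacy classes of subgroups of `G`. -/
def SubgroupConj (G : Type*) [Group G] : Type _ :=
  Quotient (MulAction.orbitRel (ConjAct G) (Subgroup G))

variable {G : Type*} [Group G]

/-- The conjugacy class of a subgroup. -/
def Subgroup.toConj (K : Subgroup G) : SubgroupConj G :=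
  Quotient.mk (MulAction.orbitRel (ConjAct G) (Subgroup G)) K

/-- A representative of a conjugacy class of subgroups. -/
def SubgroupConj.rep (c : SubgroupConj G) : Subgroup G := Quotient.out c

instance : DecidableEq (SubgroupConj G) := Classical.decEq _

instance [Finite G] : Finite (Subgroup G) :=
  Finite.of_injective (fun H => (H : Set G)) fun _ _ h => SetLike.ext' h

instance [Finite G] : Finite (SubgroupConj G) := Quotient.finite _

noncomputable instance [Finite G] : Fintype (SubgroupConj G) := Fintype.ofFinite _

instance [Finite G] (s t : Set G) : Finite (DoubleCoset.Quotient s t) :=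
  Quotient.finite _

noncomputable instance [Finite G] (s t : Set G) : Fintype (DoubleCoset.Quotient s t) :=
  Fintype.ofFinite _

/-- The conjugate subgroup `g K g⁻¹`. -/
def conjSub (g : G) (K : Subgroup G) : Subgroup G :=
  Subgroup.map (MulAut.conj g).toMonoidHom K

/-- The rational Burnside ring of `G`, as the free `ℚ`-module on the classes `[G/Γ]`. -/
abbrev BQ (G : Type*) [Group G] := SubgroupConj G →₀ ℚ

variable [Finite G]

/-- The double coset formula for the product of two basis elements
`⟨Γ⟩⟨Γ'⟩ = Σ_{g ∈ Γ'\G\Γ} ⟨Γ ∩ g⁻¹ Γ' g⟩`. -/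
def basisMul (c d : SubgroupConj G) : BQ G :=
  ∑ q : DoubleCoset.Quotient (d.rep : Set G) (c.rep : Set G),
    Finsupp.single (Subgroup.toConj (c.rep ⊓ conjSub (Quotient.out q)⁻¹ d.rep)) 1

/-- The multiplication of the Burnside ring in the basis `[G/Γ]`. -/
def mulB (x y : BQ G) : BQ G :=
  x.sum fun c a => y.sum fun d b => (a * b) • basisMul c d

/-- The unit `[G/G]` of the Burnside ring. -/
def oneB : BQ G := Finsupp.single (Subgroup.toConj (⊤ : Subgroup G)) 1

/-- Induction along an (injective) group homomorphism. -/
def indF {H : Type*} [Group H] (f : H →* G) (y : BQ H) : BQ G :=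
  y.sum fun c a => Finsupp.single (Subgroup.toConj (c.rep.map f)) a

/-- Restriction of the basis element `[G/Γ]` along `f : H →* G`:
`Res [G/Γ] = Σ_{g ∈ f(H)\G/Γ} [H / f⁻¹(g Γ g⁻¹)]`. -/
def resBasis {H : Type*} [Group H] (f : H →* G) (c : SubgroupConj G) : BQ H :=
  ∑ q : DoubleCoset.Quotient (f.range : Set G) (c.rep : Set G),
    Finsupp.single (Subgroup.toConj ((conjSub (Quotient.out q) c.rep).comap f)) 1

/-- Restriction along a group homomorphism. -/
def resF {H : Type*} [Group H] (f : H →* G) (x : BQ G) : BQ H :=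
  x.sum fun c a => a • resBasis f c

/-- The mark of the basis element `[G/Γ]` at (the class of) `Δ`: the number of
`Δ`-fixed points of `G/Γ`. -/
def markBasis (c d : SubgroupConj G) : ℚ :=
  (Nat.card {x : G ⧸ c.rep // ∀ k ∈ d.rep, k • x = x} : ℚ)

/-- The mark homomorphism, in the basis `[G/Γ]`. -/
def markMap (x : BQ G) : SubgroupConj G → ℚ :=
  fun d => x.sum fun c a => a * markBasis c d

/-- `x` is the primitive idempotent of `B(G) ⊗ ℚ` supported at the full subgroup:
its mark at `G` is `1` and its marks at all proper subgroups vanish. -/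
def IsTopIdem (x : BQ G) : Prop :=
  markMap x = fun d => if d = Subgroup.toConj (⊤ : Subgroup G) then 1 else 0

/-- `|N_G(H)/H|`. -/
def nuG (H : Subgroup G) : ℕ :=
  Nat.card (Subgroup.normalizer (H : Set G) ⧸ H.subgroupOf (Subgroup.normalizer (H : Set G)))


/-- The conjugation isomorphism `H → gHg⁻¹`, as a monoid homomorphism. -/
def conjHom (g : G) (H : Subgroup G) : ↥H →* ↥(conjSub g H) :=
  ((MulAut.conj g).toMonoidHom.comp H.subtype).codRestrict (conjSub g H)
    (fun h => Subgroup.mem_map_of_mem _ h.2)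

/-- Conjugation by an element of the normalizer of `H`, as an endomorphism of `H`. -/
def normConjHom (H : Subgroup G) (n : G) (hn : n ∈ Subgroup.normalizer (H : Set G)) : ↥H →* ↥H :=
  ((MulAut.conj n).toMonoidHom.comp H.subtype).codRestrict H
    (fun h => by simpa using (Subgroup.mem_normalizer_iff.mp hn ↑h).mp h.2)

section AuxDev

variable {G : Type*} [Group G]

lemma mem_conjSub {g x : G} {K : Subgroup G} : x ∈ conjSub g K ↔ g⁻¹ * x * g ∈ K := by
  constructor
  · rintro ⟨k, hk, rfl⟩
    simpa [MulAut.conj_apply, mul_assoc] using hk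
  · intro h
    refine ⟨g⁻¹ * x * g, h, ?_⟩
    simp [MulAut.conj_apply]
    group

lemma toConj_rep (c : SubgroupConj G) : Subgroup.toConj c.rep = c := Quotient.out_eq c

lemma conjAct_smul_eq (u : ConjAct G) (K : Subgroup G) :
    u • K = conjSub (ConjAct.ofConjAct u) K := by
  ext x
  rw [Subgroup.mem_smul_pointwise_iff_exists]
  constructor
  · rintro ⟨s, hs, rfl⟩
    exact ⟨s, hs, by simp [ConjAct.smul_def, MulAut.conj_apply]⟩
  · rintro ⟨s, hs, rfl⟩
    exact ⟨s, hs, by simp [ConjAct.smul_def, MulAut.conj_apply]⟩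

lemma toConj_conjSub (g : G) (K : Subgroup G) :
    Subgroup.toConj (conjSub g K) = Subgroup.toConj K := by
  apply Quotient.sound
  show conjSub g K ∈ MulAction.orbit (ConjAct G) K
  exact ⟨ConjAct.toConjAct g, by simpa using (conjAct_smul_eq (ConjAct.toConjAct g) K)⟩

lemma exists_rep_toConj (K : Subgroup G) :
    ∃ g : G, (Subgroup.toConj K).rep = conjSub g K := by
  have h : Subgroup.toConj ((Subgroup.toConj K).rep) = Subgroup.toConj K := toConj_rep _
  have h2 : (Subgroup.toConj K).rep ∈ MulAction.orbit (ConjAct G) K := Quotient.exact h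
  obtain ⟨u, hu⟩ := h2
  refine ⟨ConjAct.ofConjAct u, ?_⟩
  rw [← hu]
  exact conjAct_smul_eq u K

/-- The number of `D`-fixed points of `G ⧸ K`, as a rational number. -/
def markAt (K D : Subgroup G) : ℚ :=
  (Nat.card {x : G ⧸ K // ∀ k ∈ D, k • x = x} : ℚ)

lemma markBasis_eq [Finite G] (c d : SubgroupConj G) : markBasis c d = markAt c.rep d.rep := rfl

lemma markAt_congr {K K' : Subgroup G} (D : Subgroup G) (e : G ⧸ K ≃ G ⧸ K')
    (he : ∀ (g : G) (x : G ⧸ K), e (g • x) = g • e x) :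
    markAt K D = markAt K' D := by
  unfold markAt
  congr 1
  apply Nat.card_congr
  refine e.subtypeEquiv fun x => ?_
  constructor
  · intro h k hk
    rw [← he, h k hk]
  · intro h k hk
    apply e.injective
    rw [he, h k hk]

lemma markAt_conjSub (g : G) (K D : Subgroup G) : markAt (conjSub g K) D = markAt K D := by
  symm
  refine markAt_congr D ⟨Quotient.map' (fun a => a * g⁻¹) ?_, Quotient.map' (fun a => a * g) ?_,
    ?_, ?_⟩ ?_
  · intro a b hab
    rw [QuotientGroup.leftRel_apply] at hab ⊢
    show (a * g⁻¹)⁻¹ * (b * g⁻¹) ∈ conjSub g K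
    rw [mem_conjSub]
    have : g⁻¹ * ((a * g⁻¹)⁻¹ * (b * g⁻¹)) * g = a⁻¹ * b := by group
    rwa [this]
  · intro a b hab
    rw [QuotientGroup.leftRel_apply] at hab ⊢
    rw [mem_conjSub] at hab
    show (a * g)⁻¹ * (b * g) ∈ K
    have : (a * g)⁻¹ * (b * g) = g⁻¹ * (a⁻¹ * b) * g := by group
    rwa [this]
  · intro x
    induction x using Quotient.inductionOn' with
    | h a => simp [Quotient.map'_mk'', mul_assoc]
  · intro x
    induction x using Quotient.inductionOn' with
    | h a => simp [Quotient.map'_mk'', mul_assoc]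
  · intro h x
    induction x using Quotient.inductionOn' with
    | h a =>
      show QuotientGroup.mk (h * a * g⁻¹) = (QuotientGroup.mk (h * (a * g⁻¹)) : G ⧸ conjSub g K)
      rw [mul_assoc]

lemma markAt_toConj_rep (K D : Subgroup G) : markAt (Subgroup.toConj K).rep D = markAt K D := by
  obtain ⟨g, hg⟩ := exists_rep_toConj K
  rw [hg, markAt_conjSub]

end AuxDev
section DosetDev

variable {G : Type*} [Group G]

/-- The stabilizer subgroup attached to a double coset. -/
def dosetGp (Γ Γ' : Subgroup G) (q : DoubleCoset.Quotient (Γ' : Set G) (Γ : Set G)) : Subgroup G :=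
  Γ ⊓ conjSub (Quotient.out q)⁻¹ Γ'

/-- The canonical map `⨆_q G/(Γ ∩ g_q⁻¹ Γ' g_q) → G/Γ × G/Γ'`. -/
def psi (Γ Γ' : Subgroup G) :
    (Σ q : DoubleCoset.Quotient (Γ' : Set G) (Γ : Set G), G ⧸ dosetGp Γ Γ' q) →
      (G ⧸ Γ) × (G ⧸ Γ') :=
  fun p => Quotient.liftOn' p.2
    (fun x => (QuotientGroup.mk x, QuotientGroup.mk (x * (Quotient.out p.1)⁻¹)))
    (by
      rintro a b hab
      rw [QuotientGroup.leftRel_apply] at hab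
      obtain ⟨h1, h2⟩ := Subgroup.mem_inf.mp hab
      rw [mem_conjSub] at h2
      refine Prod.ext ?_ ?_
      · exact QuotientGroup.eq.mpr (by simpa using h1)
      · refine QuotientGroup.eq.mpr ?_
        have : (a * (Quotient.out p.1)⁻¹)⁻¹ * (b * (Quotient.out p.1)⁻¹) =
            (Quotient.out p.1)⁻¹⁻¹ * (a⁻¹ * b) * (Quotient.out p.1)⁻¹ := by group
        rw [this]
        exact h2)

lemma psi_mk (Γ Γ' : Subgroup G) (q : DoubleCoset.Quotient (Γ' : Set G) (Γ : Set G)) (x : G) :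
    psi Γ Γ' ⟨q, QuotientGroup.mk x⟩ =
      (QuotientGroup.mk x, QuotientGroup.mk (x * (Quotient.out q)⁻¹)) := rfl

lemma psi_injective (Γ Γ' : Subgroup G) : Function.Injective (psi Γ Γ') := by
  rintro ⟨q, y⟩ ⟨q', y'⟩ h
  induction y using Quotient.inductionOn' with
  | h x =>
  induction y' using Quotient.inductionOn' with
  | h x' =>
  rw [show (Quotient.mk'' x : G ⧸ dosetGp Γ Γ' q) = QuotientGroup.mk x from rfl] at h
  rw [show (Quotient.mk'' x' : G ⧸ dosetGp Γ Γ' q') = QuotientGroup.mk x' from rfl] at h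
  rw [psi_mk, psi_mk, Prod.ext_iff] at h
  obtain ⟨h1, h2⟩ := h
  rw [QuotientGroup.eq] at h1 h2
  set g := Quotient.out q with hgdef
  set g' := Quotient.out q' with hg'def
  have h2' : g * (x⁻¹ * x') * g'⁻¹ ∈ Γ' := by
    have : (x * g⁻¹)⁻¹ * (x' * g'⁻¹) = g * (x⁻¹ * x') * g'⁻¹ := by group
    rwa [this] at h2
  have hqq : q = q' := by
    have hmk : DoubleCoset.mk Γ' Γ g = DoubleCoset.mk Γ' Γ g' := by
      rw [DoubleCoset.eq]
      refine ⟨(g * (x⁻¹ * x') * g'⁻¹)⁻¹, inv_mem h2', x⁻¹ * x', h1, by group⟩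
    rw [hgdef, hg'def] at hmk
    rwa [DoubleCoset.out_eq', DoubleCoset.out_eq'] at hmk
  subst hqq
  have hgg : g = g' := rfl
  rw [← hgg] at h2'
  congr 1
  rw [show (Quotient.mk'' x : G ⧸ dosetGp Γ Γ' q) = QuotientGroup.mk x from rfl]
  rw [show (Quotient.mk'' x' : G ⧸ dosetGp Γ Γ' q) = QuotientGroup.mk x' from rfl]
  rw [QuotientGroup.eq]
  refine Subgroup.mem_inf.mpr ⟨h1, mem_conjSub.mpr ?_⟩
  simpa using h2'

lemma psi_surjective (Γ Γ' : Subgroup G) : Function.Surjective (psi Γ Γ') := by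
  rintro ⟨ya, yb⟩
  induction ya using Quotient.inductionOn' with
  | h a =>
  induction yb using Quotient.inductionOn' with
  | h b =>
  set q : DoubleCoset.Quotient (Γ' : Set G) (Γ : Set G) := DoubleCoset.mk Γ' Γ (b⁻¹ * a) with hq
  set g := Quotient.out q with hg
  have hout : DoubleCoset.mk Γ' Γ (b⁻¹ * a) = DoubleCoset.mk Γ' Γ g := by
    rw [hg, hq, DoubleCoset.out_eq']
  rw [DoubleCoset.eq] at hout
  obtain ⟨h, hh, k, hk, hgeq⟩ := hout
  refine ⟨⟨q, QuotientGroup.mk (a * k)⟩, ?_⟩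
  rw [psi_mk]
  have hx : a * k * g⁻¹ = b * h⁻¹ := by rw [hgeq]; group
  refine Prod.ext ?_ ?_
  · show QuotientGroup.mk (a * k) = (QuotientGroup.mk a : G ⧸ Γ)
    rw [QuotientGroup.eq]
    have : (a * k)⁻¹ * a = k⁻¹ := by group
    rw [this]; exact inv_mem hk
  · show QuotientGroup.mk (a * k * g⁻¹) = (QuotientGroup.mk b : G ⧸ Γ')
    rw [hx, QuotientGroup.eq]
    have : (b * h⁻¹)⁻¹ * b = h := by group
    rw [this]; exact hh

lemma psi_smul (Γ Γ' : Subgroup G) (k : G)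
    (q : DoubleCoset.Quotient (Γ' : Set G) (Γ : Set G)) (y : G ⧸ dosetGp Γ Γ' q) :
    psi Γ Γ' ⟨q, k • y⟩ = (k • (psi Γ Γ' ⟨q, y⟩).1, k • (psi Γ Γ' ⟨q, y⟩).2) := by
  induction y using Quotient.inductionOn' with
  | h x =>
    show psi Γ Γ' ⟨q, QuotientGroup.mk (k * x)⟩ = _
    rw [psi_mk]
    have : psi Γ Γ' ⟨q, Quotient.mk'' x⟩ =
        (QuotientGroup.mk x, QuotientGroup.mk (x * (Quotient.out q)⁻¹)) := rfl
    rw [this]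
    refine Prod.ext rfl ?_
    show QuotientGroup.mk (k * x * (Quotient.out q)⁻¹) =
      (QuotientGroup.mk (k * (x * (Quotient.out q)⁻¹)) : G ⧸ Γ')
    rw [mul_assoc]

end DosetDev
section CountDev

lemma natCard_sigma {ι : Type*} [Fintype ι] (S : ι → Type*) [∀ i, Finite (S i)] :
    Nat.card (Σ i, S i) = ∑ i, Nat.card (S i) := by
  classical
  letI : ∀ i, Fintype (S i) := fun i => Fintype.ofFinite _
  simp [Nat.card_eq_fintype_card]

/-- A subtype of a sigma type by a fibrewise condition is a sigma of subtypes. -/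
def sigSubEquiv {ι : Type*} (S : ι → Type*) (C : ∀ i, S i → Prop) :
    {p : Σ i, S i // C p.1 p.2} ≃ Σ i, {x : S i // C i x} where
  toFun p := ⟨p.1.1, p.1.2, p.2⟩
  invFun s := ⟨⟨s.1, s.2.1⟩, s.2.2⟩
  left_inv := fun ⟨⟨_, _⟩, _⟩ => rfl
  right_inv := fun ⟨_, _, _⟩ => rfl

variable {G : Type*} [Group G] [Finite G]

lemma markAt_mul (Γ Γ' D : Subgroup G) :
    markAt Γ D * markAt Γ' D =
      ∑ q : DoubleCoset.Quotient (Γ' : Set G) (Γ : Set G), markAt (dosetGp Γ Γ' q) D := by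
  classical
  let E : (Σ q : DoubleCoset.Quotient (Γ' : Set G) (Γ : Set G), G ⧸ dosetGp Γ Γ' q) ≃
      (G ⧸ Γ) × (G ⧸ Γ') :=
    Equiv.ofBijective _ ⟨psi_injective Γ Γ', psi_surjective Γ Γ'⟩
  have key : Nat.card {p : Σ q : DoubleCoset.Quotient (Γ' : Set G) (Γ : Set G), G ⧸ dosetGp Γ Γ' q //
        ∀ k ∈ D, k • p.2 = p.2}
      = Nat.card ({x : G ⧸ Γ // ∀ k ∈ D, k • x = x} × {x : G ⧸ Γ' // ∀ k ∈ D, k • x = x}) := by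
    apply Nat.card_congr
    refine (E.subtypeEquiv ?_).trans Equiv.subtypeProdEquivProd
    intro p
    have hEp : E p = psi Γ Γ' p := rfl
    constructor
    · intro hf
      constructor <;> intro k hk
      · have hs := psi_smul Γ Γ' k p.1 p.2
        rw [hf k hk] at hs
        rw [hEp]
        exact (congrArg Prod.fst hs).symm
      · have hs := psi_smul Γ Γ' k p.1 p.2
        rw [hf k hk] at hs
        rw [hEp]
        exact (congrArg Prod.snd hs).symm
    · rintro ⟨hf1, hf2⟩ k hk
      rw [hEp] at hf1 hf2
      have heq : psi Γ Γ' ⟨p.1, k • p.2⟩ = psi Γ Γ' ⟨p.1, p.2⟩ := by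
        rw [psi_smul]
        have : psi Γ Γ' ⟨p.1, p.2⟩ = psi Γ Γ' p := rfl
        rw [this, hf1 k hk, hf2 k hk]
      have h' := psi_injective Γ Γ' heq
      rw [Sigma.ext_iff] at h'
      exact eq_of_heq h'.2
  have lhs : markAt Γ D * markAt Γ' D =
      ((Nat.card ({x : G ⧸ Γ // ∀ k ∈ D, k • x = x} ×
        {x : G ⧸ Γ' // ∀ k ∈ D, k • x = x})) : ℚ) := by
    unfold markAt
    rw [Nat.card_prod]
    push_cast
    ring
  rw [lhs, ← key]
  have hsig : Nat.card {p : Σ q : DoubleCoset.Quotient (Γ' : Set G) (Γ : Set G), G ⧸ dosetGp Γ Γ' q //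
        ∀ k ∈ D, k • p.2 = p.2}
      = ∑ q : DoubleCoset.Quotient (Γ' : Set G) (Γ : Set G),
          Nat.card {x : G ⧸ dosetGp Γ Γ' q // ∀ k ∈ D, k • x = x} := by
    rw [Nat.card_congr (sigSubEquiv (fun q => G ⧸ dosetGp Γ Γ' q) (fun q x => ∀ k ∈ D, k • x = x))]
    rw [natCard_sigma]
  rw [hsig]
  unfold markAt
  push_cast
  rfl

end CountDev
section MarkDev

variable {G : Type*} [Group G] [Finite G]

lemma markMap_eq (x : BQ G) (e : SubgroupConj G) :
    markMap x e = ∑ c ∈ x.support, x c * markBasis c e := rfl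

lemma markMap_add' (x y : BQ G) : markMap (x + y) = markMap x + markMap y := by
  funext e
  show ((x + y).sum fun c a => a * markBasis c e) = _
  rw [Finsupp.sum_add_index' (h := fun c b => b * markBasis c e) (fun _ => zero_mul _)
    (fun _ _ _ => add_mul _ _ _)]
  rfl

lemma markMap_smul' (q : ℚ) (x : BQ G) : markMap (q • x) = q • markMap x := by
  funext e
  show ((q • x).sum fun c a => a * markBasis c e) = q * markMap x e
  rw [Finsupp.sum_smul_index' (h := fun c b => b * markBasis c e) (fun _ => zero_mul _)]
  rw [markMap_eq, Finset.mul_sum]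
  show (x.sum fun c a => (q * a) * markBasis c e) = _
  unfold Finsupp.sum
  exact Finset.sum_congr rfl fun c _ => by ring

/-- The mark homomorphism as a linear map. -/
def markLin : BQ G →ₗ[ℚ] (SubgroupConj G → ℚ) where
  toFun := markMap
  map_add' := markMap_add'
  map_smul' := markMap_smul'

lemma markLin_apply (x : BQ G) : markLin x = markMap x := rfl

lemma markMap_single (c : SubgroupConj G) (a : ℚ) (e : SubgroupConj G) :
    markMap (Finsupp.single c a) e = a * markBasis c e := by
  show ((Finsupp.single c a).sum fun c' b => b * markBasis c' e) = _
  rw [Finsupp.sum_single_index (h := fun c' b => b * markBasis c' e) (zero_mul _)]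

lemma markMap_basisMul (c d e : SubgroupConj G) :
    markMap (basisMul c d) e = markBasis c e * markBasis d e := by
  have h1 : markMap (basisMul c d) e =
      ∑ q : DoubleCoset.Quotient (d.rep : Set G) (c.rep : Set G),
        markMap (Finsupp.single
          (Subgroup.toConj (c.rep ⊓ conjSub (Quotient.out q)⁻¹ d.rep)) (1 : ℚ)) e := by
    rw [← markLin_apply]
    unfold basisMul
    rw [map_sum]
    simp only [Finset.sum_apply, markLin_apply]
  rw [h1]
  have h2 : ∀ q : DoubleCoset.Quotient (d.rep : Set G) (c.rep : Set G),
      markMap (Finsupp.single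
        (Subgroup.toConj (c.rep ⊓ conjSub (Quotient.out q)⁻¹ d.rep)) (1 : ℚ)) e =
      markAt (dosetGp c.rep d.rep q) e.rep := by
    intro q
    rw [markMap_single, one_mul, markBasis_eq, markAt_toConj_rep]
    rfl
  rw [Finset.sum_congr rfl fun q _ => h2 q]
  rw [markBasis_eq, markBasis_eq, markAt_mul]

lemma markMap_mul' (x y : BQ G) : markMap (mulB x y) = markMap x * markMap y := by
  funext e
  have h1 : markMap (mulB x y) e =
      ∑ c ∈ x.support, ∑ d ∈ y.support,
        (x c * y d) * (markBasis c e * markBasis d e) := by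
    rw [← markLin_apply]
    unfold mulB Finsupp.sum
    rw [map_sum]
    rw [Finset.sum_apply]
    refine Finset.sum_congr rfl fun c _ => ?_
    rw [map_sum, Finset.sum_apply]
    refine Finset.sum_congr rfl fun d _ => ?_
    rw [map_smul]
    rw [Pi.smul_apply, smul_eq_mul, markLin_apply, markMap_basisMul]
  rw [h1]
  show _ = markMap x e * markMap y e
  rw [markMap_eq, markMap_eq, Finset.sum_mul_sum]
  exact Finset.sum_congr rfl fun c _ => Finset.sum_congr rfl fun d _ => by ring

lemma markAt_top (D : Subgroup G) : markAt (⊤ : Subgroup G) D = 1 := by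
  unfold markAt
  haveI hss : Subsingleton (G ⧸ (⊤ : Subgroup G)) := QuotientGroup.subsingleton_quotient_top
  have h1 : Nat.card {x : G ⧸ (⊤ : Subgroup G) // ∀ k ∈ (D : Subgroup G), k • x = x} = 1 := by
    rw [Nat.card_eq_one_iff_unique]
    refine ⟨⟨fun a b => Subtype.ext (Subsingleton.elim _ _)⟩,
      ⟨⟨QuotientGroup.mk 1, fun k _ => Subsingleton.elim _ _⟩⟩⟩
  rw [h1]
  exact Nat.cast_one


lemma markMap_one' : markMap (oneB : BQ G) = 1 := by
  funext e
  show markMap (Finsupp.single (Subgroup.toConj (⊤ : Subgroup G)) 1) e = 1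
  rw [markMap_single, one_mul, markBasis_eq, markAt_toConj_rep, markAt_top]

lemma markAt_self_pos (K : Subgroup G) : 0 < markAt K K := by
  unfold markAt
  have hne : Nonempty {x : G ⧸ K // ∀ k ∈ K, k • x = x} := by
    refine ⟨⟨QuotientGroup.mk 1, fun k hk => ?_⟩⟩
    show QuotientGroup.mk (k * 1) = (QuotientGroup.mk 1 : G ⧸ K)
    rw [QuotientGroup.eq]
    simpa using inv_mem hk
  exact_mod_cast Nat.card_pos

lemma subconj_of_markAt_ne_zero {K D : Subgroup G} (h : markAt K D ≠ 0) :
    ∃ b : G, conjSub b D ≤ K := by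
  have hne : Nonempty {x : G ⧸ K // ∀ k ∈ D, k • x = x} := by
    by_contra hemp
    rw [not_nonempty_iff] at hemp
    exact h (by simp [markAt, Nat.card_of_isEmpty])
  obtain ⟨⟨x, hx⟩⟩ := hne
  induction x using Quotient.inductionOn' with
  | h a =>
  refine ⟨a⁻¹, fun z hz => ?_⟩
  rw [mem_conjSub] at hz
  have hw : a * z * a⁻¹ ∈ D := by simpa using hz
  have h2 := hx (a * z * a⁻¹) hw
  have h3 : QuotientGroup.mk ((a * z * a⁻¹) * a) = (QuotientGroup.mk a : G ⧸ K) := h2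
  rw [QuotientGroup.eq] at h3
  have h4 : ((a * z * a⁻¹) * a)⁻¹ * a = z⁻¹ := by group
  rw [h4] at h3
  simpa using inv_mem h3

lemma card_conjSub (b : G) (D : Subgroup G) :
    Nat.card (conjSub b D) = Nat.card D := by
  have e := Subgroup.equivMapOfInjective D (MulAut.conj b).toMonoidHom
    (MulAut.conj b).injective
  exact (Nat.card_congr e.toEquiv).symm

lemma markLin_ker (x : BQ G) (hx : markMap x = 0) : x = 0 := by
  by_contra hne
  have hsupp : x.support.Nonempty := Finsupp.support_nonempty_iff.mpr hne
  obtain ⟨c, hc, hmax⟩ := Finset.exists_max_image x.support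
    (fun c => Nat.card c.rep) hsupp
  have h0 : markMap x c = 0 := congrFun hx c
  rw [markMap_eq] at h0
  have hsum : ∑ c' ∈ x.support, x c' * markBasis c' c = x c * markBasis c c := by
    apply Finset.sum_eq_single_of_mem c hc
    intro c' hc' hne'
    suffices h : markBasis c' c = 0 by rw [h, mul_zero]
    by_contra hnz
    rw [markBasis_eq] at hnz
    obtain ⟨b, hb⟩ := subconj_of_markAt_ne_zero hnz
    have hc2 : Nat.card c'.rep ≤ Nat.card (conjSub b c.rep) := by
      rw [card_conjSub]
      exact hmax c' hc'
    have heq := Subgroup.eq_of_le_of_card_ge hb hc2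
    have : c' = c := by
      rw [← toConj_rep c', ← heq, toConj_conjSub, toConj_rep]
    exact hne' this
  rw [hsum] at h0
  rcases mul_eq_zero.mp h0 with h | h
  · exact Finsupp.mem_support_iff.mp hc h
  · rw [markBasis_eq] at h
    exact ne_of_gt (markAt_self_pos c.rep) h

lemma markMap_bijective' :
    Function.Bijective (markMap : BQ G → SubgroupConj G → ℚ) := by
  have hinj : Function.Injective (markMap : BQ G → SubgroupConj G → ℚ) := by
    intro x y h
    have h2 : markLin (x - y) = 0 := by
      rw [map_sub, markLin_apply, markLin_apply, h, sub_self]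
    have := markLin_ker (x - y) h2
    exact sub_eq_zero.mp this
  refine ⟨hinj, ?_⟩
  let eqv := Finsupp.linearEquivFunOnFinite ℚ ℚ (SubgroupConj G)
  let L : (SubgroupConj G → ℚ) →ₗ[ℚ] (SubgroupConj G → ℚ) :=
    markLin ∘ₗ (eqv.symm.toLinearMap)
  have hLinj : Function.Injective L := by
    intro u v huv
    have := hinj huv
    exact eqv.symm.injective this
  have hLsurj : Function.Surjective L := LinearMap.injective_iff_surjective.mp hLinj
  intro w
  obtain ⟨v, hv⟩ := hLsurj w
  exact ⟨eqv.symm v, hv⟩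

end MarkDev

/-- The mark homomorphism `B(G) ⊗ ℚ → ∏_Γ ℚ`, sending a class to its fixed-point
counts at (conjugacy classes of) subgroups, is an isomorphism of `ℚ`-algebras. -/
theorem markMap_is_ringIso (G : Type*) [Group G] [Finite G] :
    (∀ x y : BQ G, markMap (x + y) = markMap x + markMap y) ∧
    (∀ (q : ℚ) (x : BQ G), markMap (q • x) = q • markMap x) ∧
    (∀ x y : BQ G, markMap (mulB x y) = markMap x * markMap y) ∧
    markMap (oneB : BQ G) = 1 ∧
    Function.Bijective (markMap : BQ G → SubgroupConj G → ℚ) := by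
  exact ⟨markMap_add', markMap_smul', markMap_mul', markMap_one', markMap_bijective'⟩

end
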